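/- Let (Z,≤) index filtered spectra as functors from the poset of integers, and define the Day convolution smash product so that (X_* ∧ Y_*)_n = colim over the zigzag of X_i ∧ Y_j with i + j ≤ n. Then the associated graded functor Gr, defined by Gr_n(X_*) = X_n / X_{n-1} (point-set cofiber/quotient), is strong symmetric monoidal: there is a natural isomorphism Gr(X_* ∧ Y_*) ≅ Gr(X_*) ∧ Gr(Y_*), where the graded smash product is (A_* ∧ B_*)_n = ⊕_{i+j=n} A_i ∧ B_j. -/

import Mathlib

open TensorProduct DirectSum

noncomputable section
namespace Stmt10

variable (R : Type) [CommRing R]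
variable (X Y : ℤ → Type)
variable [∀ i, AddCommGroup (X i)] [∀ i, Module R (X i)]
variable [∀ i, AddCommGroup (Y i)] [∀ i, Module R (Y i)]
variable (f : ∀ i j : ℤ, i + 1 = j → (X i →ₗ[R] X j))
variable (g : ∀ i j : ℤ, i + 1 = j → (Y i →ₗ[R] Y j))

/-- The index set for degree `n` of the Day convolution: pairs `(i,j)` with `i + j = n`. -/
abbrev CIdx (n : ℤ) : Type := {p : ℤ × ℤ // p.1 + p.2 = n}

/-- The direct sum `⊕_{i+j=n} Xᵢ ⊗ Yⱼ`, of which degree `n` of the Day convolution is a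
quotient. -/
abbrev ConvSum (n : ℤ) : Type :=
  DirectSum (CIdx n) (fun p => X p.1.1 ⊗[R] Y p.1.2)

/-- The canonical inclusion of the `(i,j)` summand. -/
abbrev convLof (n : ℤ) (p : CIdx n) :
    (X p.1.1 ⊗[R] Y p.1.2) →ₗ[R] ConvSum R X Y n :=
  DirectSum.lof R (CIdx n) (fun q => X q.1.1 ⊗[R] Y q.1.2) p

/-- The relations presenting `(X ⊛ Y)ₙ = colim_{i+j≤n} Xᵢ ⊗ Yⱼ` as a quotient of
`⊕_{i+j=n} Xᵢ ⊗ Yⱼ`: for `i + j = n - 1`, the images of `x ⊗ y ∈ Xᵢ ⊗ Yⱼ` under the two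
structure maps are identified. -/
def ConvRel (n : ℤ) : Submodule R (ConvSum R X Y n) :=
  Submodule.span R {z | ∃ (i j : ℤ) (hij : i + j + 1 = n) (x : X i) (y : Y j),
    z = convLof R X Y n ⟨(i, j + 1), by omega⟩ (x ⊗ₜ[R] g j (j + 1) rfl y)
      - convLof R X Y n ⟨(i + 1, j), by omega⟩ (f i (i + 1) rfl x ⊗ₜ[R] y)}

/-- Degree `n` of the Day convolution `X ⊛ Y`. -/
abbrev Conv (n : ℤ) : Type := ConvSum R X Y n ⧸ ConvRel R X Y f g n

/-- The image of the structure map `(X ⊛ Y)_{n-1} → (X ⊛ Y)ₙ` of the convolution. -/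
def ConvIm (n : ℤ) : Submodule R (Conv R X Y f g n) :=
  Submodule.span R {w | ∃ (i j : ℤ) (hij : i + j + 1 = n) (x : X i) (y : Y j),
    w = Submodule.Quotient.mk
      (convLof R X Y n ⟨(i, j + 1), by omega⟩ (x ⊗ₜ[R] g j (j + 1) rfl y))}

/-- The associated graded `Gr_n(X ⊛ Y) = (X ⊛ Y)ₙ / (X ⊛ Y)_{n-1}`. -/
abbrev GrConv (n : ℤ) : Type := Conv R X Y f g n ⧸ ConvIm R X Y f g n

/-- The associated graded `Gr_i(X) = Xᵢ / X_{i-1}`. -/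
abbrev GrX (i : ℤ) : Type := X i ⧸ LinearMap.range (f (i - 1) i (by omega))

/-- The associated graded `Gr_j(Y) = Yⱼ / Y_{j-1}`. -/
abbrev GrY (j : ℤ) : Type := Y j ⧸ LinearMap.range (g (j - 1) j (by omega))

/-- Degree `n` of the graded (Day convolution) product
`(Gr X ⊛ Gr Y)ₙ = ⊕_{i+j=n} Gr_i(X) ⊗ Gr_j(Y)`. -/
abbrev GrTensor (n : ℤ) : Type :=
  DirectSum (CIdx n) (fun p => GrX R X f p.1.1 ⊗[R] GrY R Y g p.1.2)

/-- The canonical inclusion of the `(i,j)` summand of the graded product. -/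
abbrev grLof (n : ℤ) (p : CIdx n) :
    (GrX R X f p.1.1 ⊗[R] GrY R Y g p.1.2) →ₗ[R] GrTensor R X Y f g n :=
  DirectSum.lof R (CIdx n) (fun q => GrX R X f q.1.1 ⊗[R] GrY R Y g q.1.2) p

/-! ### Auxiliary constructions -/

lemma grX_mk_f (a i : ℤ) (ha : a + 1 = i) (x : X a) :
    (Submodule.Quotient.mk (f a i ha x) : GrX R X f i) = 0 := by
  obtain rfl : a = i - 1 := by omega
  exact (Submodule.Quotient.mk_eq_zero _).2 ⟨x, rfl⟩

lemma grY_mk_g (a j : ℤ) (ha : a + 1 = j) (y : Y a) :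
    (Submodule.Quotient.mk (g a j ha y) : GrY R Y g j) = 0 := by
  obtain rfl : a = j - 1 := by omega
  exact (Submodule.Quotient.mk_eq_zero _).2 ⟨y, rfl⟩

/-- The comparison map on the big direct sum, sending `x ⊗ y` to `[x] ⊗ [y]`. -/
def phiAux (n : ℤ) : ConvSum R X Y n →ₗ[R] GrTensor R X Y f g n :=
  DirectSum.toModule R (CIdx n) _ fun p =>
    grLof R X Y f g n p ∘ₗ
      (TensorProduct.map (Submodule.mkQ _) (Submodule.mkQ _) :
        (X p.1.1 ⊗[R] Y p.1.2) →ₗ[R] (GrX R X f p.1.1 ⊗[R] GrY R Y g p.1.2))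

lemma phiAux_lof (n : ℤ) (p : CIdx n) (x : X p.1.1) (y : Y p.1.2) :
    phiAux R X Y f g n (convLof R X Y n p (x ⊗ₜ[R] y)) =
      grLof R X Y f g n p
        ((Submodule.Quotient.mk x : GrX R X f p.1.1) ⊗ₜ[R]
          (Submodule.Quotient.mk y : GrY R Y g p.1.2)) := by
  simp [phiAux]

lemma convRel_le_ker (n : ℤ) :
    ConvRel R X Y f g n ≤ LinearMap.ker (phiAux R X Y f g n) := by
  rw [ConvRel, Submodule.span_le]
  rintro _ ⟨i, j, hij, x, y, rfl⟩
  simp only [SetLike.mem_coe, LinearMap.mem_ker, map_sub, phiAux_lof]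
  rw [grY_mk_g R Y g j (j + 1) rfl y, grX_mk_f R X f i (i + 1) rfl x]
  simp

/-- The comparison map on the convolution. -/
def phi1 (n : ℤ) : Conv R X Y f g n →ₗ[R] GrTensor R X Y f g n :=
  (ConvRel R X Y f g n).liftQ (M₂ := GrTensor R X Y f g n) (phiAux R X Y f g n) (convRel_le_ker R X Y f g n)

lemma convIm_le_ker (n : ℤ) :
    ConvIm R X Y f g n ≤ LinearMap.ker (phi1 R X Y f g n) := by
  rw [ConvIm, Submodule.span_le]
  rintro _ ⟨i, j, hij, x, y, rfl⟩
  simp only [SetLike.mem_coe, LinearMap.mem_ker, phi1, Submodule.liftQ_apply, phiAux_lof]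
  rw [grY_mk_g R Y g j (j + 1) rfl y]
  simp

/-- The comparison map `Gr(X ⊛ Y) → Gr(X) ⊛ Gr(Y)`. -/
def phi (n : ℤ) : GrConv R X Y f g n →ₗ[R] GrTensor R X Y f g n :=
  Submodule.liftQ _ (M₂ := GrTensor R X Y f g n) (phi1 R X Y f g n) (convIm_le_ker R X Y f g n)

lemma phi_spec (n : ℤ) (p : CIdx n) (x : X p.1.1) (y : Y p.1.2) :
    phi R X Y f g n (Submodule.Quotient.mk (Submodule.Quotient.mk
        (convLof R X Y n p (x ⊗ₜ[R] y))))
      = grLof R X Y f g n p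
          ((Submodule.Quotient.mk x : GrX R X f p.1.1) ⊗ₜ[R]
            (Submodule.Quotient.mk y : GrY R Y g p.1.2)) := by
  simp [phi, phi1, phiAux_lof]

/-- The inverse on a summand, before descending to the quotients. -/
def psiAux (n : ℤ) (p : CIdx n) :
    (X p.1.1 ⊗[R] Y p.1.2) →ₗ[R] GrConv R X Y f g n :=
  (ConvIm R X Y f g n).mkQ ∘ₗ (ConvRel R X Y f g n).mkQ ∘ₗ convLof R X Y n p

lemma conv_mk_g' (n i a : ℤ) (h : i + (a + 1) = n) (x : X i) (y : Y a) :
    (ConvIm R X Y f g n).mkQ ((ConvRel R X Y f g n).mkQ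
      (convLof R X Y n ⟨(i, a + 1), h⟩ (x ⊗ₜ[R] g a (a + 1) rfl y))) = 0 := by
  rw [Submodule.mkQ_apply, Submodule.mkQ_apply, Submodule.Quotient.mk_eq_zero]
  exact Submodule.subset_span ⟨i, a, by omega, x, y, rfl⟩

lemma conv_mk_g (n i j a : ℤ) (h : i + j = n) (ha : a + 1 = j) (x : X i) (y : Y a) :
    (ConvIm R X Y f g n).mkQ ((ConvRel R X Y f g n).mkQ
      (convLof R X Y n ⟨(i, j), h⟩ (x ⊗ₜ[R] g a j ha y))) = 0 := by
  subst ha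
  exact conv_mk_g' R X Y f g n i a h x y

lemma conv_mk_f' (n a j : ℤ) (h : a + 1 + j = n) (x : X a) (y : Y j) :
    (ConvIm R X Y f g n).mkQ ((ConvRel R X Y f g n).mkQ
      (convLof R X Y n ⟨(a + 1, j), h⟩ (f a (a + 1) rfl x ⊗ₜ[R] y))) = 0 := by
  have key : (ConvRel R X Y f g n).mkQ
        (convLof R X Y n ⟨(a + 1, j), h⟩ (f a (a + 1) rfl x ⊗ₜ[R] y))
      = (ConvRel R X Y f g n).mkQ
        (convLof R X Y n ⟨(a, j + 1), by omega⟩ (x ⊗ₜ[R] g j (j + 1) rfl y)) := by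
    rw [Submodule.mkQ_apply, Submodule.mkQ_apply, eq_comm, Submodule.Quotient.eq]
    exact Submodule.subset_span ⟨a, j, by omega, x, y, rfl⟩
  rw [key]
  exact conv_mk_g' R X Y f g n a j (by omega) x y

lemma conv_mk_f (n i j a : ℤ) (h : i + j = n) (ha : a + 1 = i) (x : X a) (y : Y j) :
    (ConvIm R X Y f g n).mkQ ((ConvRel R X Y f g n).mkQ
      (convLof R X Y n ⟨(i, j), h⟩ (f a i ha x ⊗ₜ[R] y))) = 0 := by
  subst ha
  exact conv_mk_f' R X Y f g n a j h x y

lemma psi_vanish (n : ℤ) (p : CIdx n) :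
    LinearMap.range (TensorProduct.map
        (LinearMap.range (f (p.1.1 - 1) p.1.1 (by omega))).subtype LinearMap.id) ⊔
      LinearMap.range (TensorProduct.map LinearMap.id
        (LinearMap.range (g (p.1.2 - 1) p.1.2 (by omega))).subtype)
      ≤ LinearMap.ker (psiAux R X Y f g n p) := by
  apply sup_le
  · rintro _ ⟨w, rfl⟩
    rw [LinearMap.mem_ker, ← LinearMap.comp_apply]
    suffices h : psiAux R X Y f g n p ∘ₗ TensorProduct.map
        (LinearMap.range (f (p.1.1 - 1) p.1.1 (by omega))).subtype LinearMap.id = 0 by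
      rw [h]; rfl
    apply TensorProduct.ext'
    rintro ⟨_, a, rfl⟩ y
    simp only [LinearMap.comp_apply, TensorProduct.map_tmul, Submodule.coe_subtype,
      LinearMap.id_apply, LinearMap.zero_apply, psiAux]
    exact conv_mk_f R X Y f g n p.1.1 p.1.2 (p.1.1 - 1) p.2 (by omega) a y
  · rintro _ ⟨w, rfl⟩
    rw [LinearMap.mem_ker, ← LinearMap.comp_apply]
    suffices h : psiAux R X Y f g n p ∘ₗ TensorProduct.map LinearMap.id
        (LinearMap.range (g (p.1.2 - 1) p.1.2 (by omega))).subtype = 0 by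
      rw [h]; rfl
    apply TensorProduct.ext'
    rintro x ⟨_, a, rfl⟩
    simp only [LinearMap.comp_apply, TensorProduct.map_tmul, Submodule.coe_subtype,
      LinearMap.id_apply, LinearMap.zero_apply, psiAux]
    exact conv_mk_g R X Y f g n p.1.1 p.1.2 (p.1.2 - 1) p.2 (by omega) x a

/-- The inverse on a summand. -/
def psiComp (n : ℤ) (p : CIdx n) :
    (GrX R X f p.1.1 ⊗[R] GrY R Y g p.1.2) →ₗ[R] GrConv R X Y f g n :=
  Submodule.liftQ _ (psiAux R X Y f g n p) (psi_vanish R X Y f g n p) ∘ₗ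
    (TensorProduct.quotientTensorQuotientEquiv
      (LinearMap.range (f (p.1.1 - 1) p.1.1 (by omega)))
      (LinearMap.range (g (p.1.2 - 1) p.1.2 (by omega)))).toLinearMap

/-- The inverse comparison map `Gr(X) ⊛ Gr(Y) → Gr(X ⊛ Y)`. -/
def psi (n : ℤ) : GrTensor R X Y f g n →ₗ[R] GrConv R X Y f g n :=
  DirectSum.toModule R (CIdx n) _ (psiComp R X Y f g n)

lemma psi_spec (n : ℤ) (p : CIdx n) (x : X p.1.1) (y : Y p.1.2) :
    psi R X Y f g n (grLof R X Y f g n p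
        ((Submodule.Quotient.mk x : GrX R X f p.1.1) ⊗ₜ[R]
          (Submodule.Quotient.mk y : GrY R Y g p.1.2)))
      = Submodule.Quotient.mk (Submodule.Quotient.mk
          (convLof R X Y n p (x ⊗ₜ[R] y))) := by
  simp only [psi, grLof, DirectSum.toModule_lof, psiComp, LinearMap.comp_apply,
    LinearEquiv.coe_coe, TensorProduct.quotientTensorQuotientEquiv_apply_tmul_mk_tmul_mk,
    Submodule.liftQ_apply, psiAux]
  rfl

/-- The associated graded functor `Gr` (point-set cokernel of the structure maps) is
strong symmetric monoidal for the Day convolution of `ℤ`-indexed filtered modules: for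
filtered modules `X_*`, `Y_*` there is a natural isomorphism
`Gr(X ⊛ Y) ≅ Gr(X) ⊛ Gr(Y)`, where `(A ⊛ B)ₙ = ⊕_{i+j=n} Aᵢ ⊗ Bⱼ` on graded objects; it
is the canonical comparison map, sending the class of `x ⊗ y ∈ Xᵢ ⊗ Yⱼ` (`i + j = n`) to
`[x] ⊗ [y] ∈ Gr_i(X) ⊗ Gr_j(Y)`. -/
theorem stmt10 : ∀ n : ℤ, ∃ e : GrConv R X Y f g n ≃ₗ[R] GrTensor R X Y f g n,
    ∀ (i j : ℤ) (h : i + j = n) (x : X i) (y : Y j),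
      e (Submodule.Quotient.mk (Submodule.Quotient.mk
            (convLof R X Y n ⟨(i, j), h⟩ (x ⊗ₜ[R] y))))
        = grLof R X Y f g n ⟨(i, j), h⟩
            ((Submodule.Quotient.mk x : GrX R X f i) ⊗ₜ[R]
              (Submodule.Quotient.mk y : GrY R Y g j)) := by
  intro n
  refine ⟨LinearEquiv.ofLinear (phi R X Y f g n) (psi R X Y f g n) ?_ ?_, ?_⟩
  · apply DirectSum.linearMap_ext
    intro p
    apply TensorProduct.ext'
    intro u v
    obtain ⟨x, rfl⟩ := Submodule.Quotient.mk_surjective _ u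
    obtain ⟨y, rfl⟩ := Submodule.Quotient.mk_surjective _ v
    simp only [LinearMap.comp_apply, LinearMap.id_comp]
    rw [show (DirectSum.lof R (CIdx n)
        (fun q => GrX R X f q.1.1 ⊗[R] GrY R Y g q.1.2) p) = grLof R X Y f g n p from rfl,
      psi_spec R X Y f g n p x y, phi_spec R X Y f g n p x y]
  · apply Submodule.linearMap_qext
    apply Submodule.linearMap_qext
    apply DirectSum.linearMap_ext
    intro p
    apply TensorProduct.ext'
    intro x y
    simp only [LinearMap.comp_apply, Submodule.mkQ_apply, LinearMap.id_comp]
    rw [show (DirectSum.lof R (CIdx n)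
        (fun q => X q.1.1 ⊗[R] Y q.1.2) p) = convLof R X Y n p from rfl,
      phi_spec R X Y f g n p x y, psi_spec R X Y f g n p x y]
  · intro i j h x y
    exact phi_spec R X Y f g n ⟨(i, j), h⟩ x y

end Stmt10
end
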